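/- arXiv:math/0308098 — 2 statements merged into one kernel-verified Lean document; each statement's English description precedes it below -/
import Mathlib

section
/- A linear subspace L ⊆ ℝ^n is an i-dimensional lattice plane of a lattice Λ if and only if its orthogonal complement L^⊥ is an (n−i)-dimensional lattice plane of the dual lattice Λ*. -/
open scoped RealInnerProductSpace Pointwise
open MeasureTheory Filter

noncomputable section

abbrev Euc (n : ℕ) := EuclideanSpace ℝ (Fin n)

/-- The set of all integer combinations of the family of vectors `v`. -/
def intSpan {n : ℕ} {ι : Type} [Fintype ι] (v : ι → Euc n) : Set (Euc n) :=
  {x | ∃ z : ι → ℤ, x = ∑ j, (z j : ℝ) • v j}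

/-- `Λ` is a (full-rank) lattice in `ℝⁿ`: the integer span of a basis of `ℝⁿ`. -/
def IsLattice {n : ℕ} (Λ : Set (Euc n)) : Prop :=
  ∃ b : Module.Basis (Fin n) ℝ (Euc n), Λ = intSpan ⇑b

/-- Gram determinant of a family of vectors. -/
def gramDet {n : ℕ} {ι : Type} [Fintype ι] [DecidableEq ι] (v : ι → Euc n) : ℝ :=
  Matrix.det (Matrix.of fun j k : ι => ⟪v j, v k⟫)

/-- The determinant (covolume) of the lattice with ℤ-basis `v`:
the square root of the Gram determinant. -/
def latDet {n : ℕ} {ι : Type} [Fintype ι] [DecidableEq ι] (v : ι → Euc n) : ℝ :=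
  Real.sqrt (gramDet v)

/-- `v` is a ℤ-basis of the set `S`: a linearly independent family whose
integer span is `S`. -/
def IsZBasis {n : ℕ} {ι : Type} [Fintype ι] (v : ι → Euc n) (S : Set (Euc n)) : Prop :=
  LinearIndependent ℝ v ∧ S = intSpan v

/-- The determinant (covolume) of a rank-`i` lattice `S` (independent of the
chosen ℤ-basis). -/
def detOf {n : ℕ} (i : ℕ) (S : Set (Euc n)) : ℝ :=
  sInf {d | ∃ v : Fin i → Euc n, IsZBasis v S ∧ d = latDet v}

/-- The dual (polar) lattice of `Λ`. -/
def dualLattice {n : ℕ} (Λ : Set (Euc n)) : Set (Euc n) :=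
  {y | ∀ x ∈ Λ, ∃ m : ℤ, ⟪x, y⟫ = (m : ℝ)}

/-- `L` is an `i`-dimensional lattice plane of `Λ`: `L` has dimension `i` and
`Λ ∩ L` spans `L`. -/
def IsLatticePlane {n : ℕ} (Λ : Set (Euc n)) (i : ℕ) (L : Submodule ℝ (Euc n)) : Prop :=
  Module.finrank ℝ L = i ∧ Submodule.span ℝ (Λ ∩ (L : Set (Euc n))) = L

/-- Orthogonal projection of a set onto the subspace `L`. -/
def projTo {n : ℕ} (L : Submodule ℝ (Euc n)) (S : Set (Euc n)) : Set (Euc n) :=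
  (fun x => ((L.orthogonalProjectionOnto x : L) : Euc n)) '' S

/-- Rankin's invariant (in the normalization `τ(n,i)` of Henk's paper). -/
def rankin (n i : ℕ) : ℝ :=
  sSup {r | ∃ Λ : Set (Euc n), IsLattice Λ ∧
    r = sInf {s | ∃ L : Submodule ℝ (Euc n), IsLatticePlane Λ i L ∧
      s = detOf i (Λ ∩ (L : Set (Euc n))) ^ ((1:ℝ)/i) / detOf n Λ ^ ((1:ℝ)/n)}}

/-- `S` is a packing set of `K`: distinct translates of `K` by elements of `S`
have disjoint interiors. -/
def IsPackingSet {n : ℕ} (K : Set (Euc n)) (S : Set (Euc n)) : Prop :=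
  ∀ b₁ ∈ S, ∀ b₂ ∈ S, b₁ ≠ b₂ → interior (b₁ +ᵥ K) ∩ interior (b₂ +ᵥ K) = ∅

/-- The packing radius `λ(K,Λ)`. -/
def packingRadius {n : ℕ} (K Λ : Set (Euc n)) : ℝ :=
  sSup {l : ℝ | 0 < l ∧ IsPackingSet (l • K) Λ}

/-- The covering radius `μ(K,Λ)`. -/
def coveringRadius {n : ℕ} (K Λ : Set (Euc n)) : ℝ :=
  sInf {m : ℝ | 0 < m ∧ Λ + m • K = Set.univ}

/-- `K` is a `0`-symmetric convex body with nonempty interior. -/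
def IsBody {n : ℕ} (K : Set (Euc n)) : Prop :=
  Convex ℝ K ∧ IsCompact K ∧ K = -K ∧ (interior K).Nonempty

/-- The density `δ(K)` of a densest lattice packing of `K`. -/
def packDensity {n : ℕ} (K : Set (Euc n)) : ℝ :=
  sSup {d | ∃ Λ : Set (Euc n), IsLattice Λ ∧ IsPackingSet K Λ ∧
    d = (volume K).toReal / detOf n Λ}

/-- The density `θ(K)` of a thinnest lattice covering of `K`. -/
def covDensity {n : ℕ} (K : Set (Euc n)) : ℝ :=
  sInf {d | ∃ Λ : Set (Euc n), IsLattice Λ ∧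
    d = (volume K).toReal * coveringRadius K Λ ^ n / detOf n Λ}

/-- Zong's simultaneous packing and covering constant `γ(K)`. -/
def gammaSim {n : ℕ} (K : Set (Euc n)) : ℝ :=
  sInf {r | ∃ Λ : Set (Euc n), IsLattice Λ ∧ r = coveringRadius K Λ / packingRadius K Λ}

/-- The `i`-th covering minimum `μᵢ(K,Λ)` of Kannan and Lovász. -/
def covMin {n : ℕ} (i : ℕ) (K Λ : Set (Euc n)) : ℝ :=
  sInf {m : ℝ | 0 < m ∧ ∀ A : AffineSubspace ℝ (Euc n), (A : Set (Euc n)).Nonempty →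
    Module.finrank ℝ A.direction = n - i → ((Λ + m • K) ∩ (A : Set (Euc n))).Nonempty}

/-- The generalized simultaneous constant `γᵢ(K)`. -/
def gammaI {n : ℕ} (i : ℕ) (K : Set (Euc n)) : ℝ :=
  sInf {r | ∃ Λ : Set (Euc n), IsLattice Λ ∧ r = covMin i K Λ / packingRadius K Λ}

/-- The projection functional `ρᵢ(K)`. -/
def rhoI {n : ℕ} (i : ℕ) (K : Set (Euc n)) : ℝ :=
  sSup {r | ∃ A : (Euc n) ≃ₗ[ℝ] (Euc n),
    r = sInf {s | ∃ L : Submodule ℝ (Euc n), Module.finrank ℝ L = i ∧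
      s = (volume (⇑A '' K)).toReal ^ ((1:ℝ)/n) /
        ((MeasureTheory.Measure.hausdorffMeasure (i:ℝ) (projTo L (⇑A '' K))).toReal) ^ ((1:ℝ)/i)}}

/-- Length of a shortest nonzero vector of `Λ`. -/
def lambdaOne {n : ℕ} (Λ : Set (Euc n)) : ℝ :=
  sInf {r | ∃ x ∈ Λ, x ≠ 0 ∧ r = ‖x‖}

/-- The (normalized) Hermite constant `τ(n,1)`. -/
def hermite (n : ℕ) : ℝ :=
  sSup {r | ∃ Λ : Set (Euc n), IsLattice Λ ∧ r = lambdaOne Λ / detOf n Λ ^ ((1:ℝ)/n)}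

/-- Volume of the `d`-dimensional unit ball. -/
def kappa (d : ℕ) : ℝ := Real.pi ^ ((d:ℝ)/2) / Real.Gamma ((d:ℝ)/2 + 1)

/-- Upper density of the arrangement `S + K`. -/
def setDensity {n : ℕ} (K S : Set (Euc n)) : ℝ :=
  Filter.limsup (fun r : ℝ =>
    (volume ((S + K) ∩ Metric.ball (0 : Euc n) r)).toReal /
    (volume (Metric.ball (0 : Euc n) r)).toReal) Filter.atTop

/-- The density `δ_T(K)` of a densest translative packing of `K`. -/
def transPackDensity {n : ℕ} (K : Set (Euc n)) : ℝ :=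
  sSup {d | ∃ S : Set (Euc n), IsPackingSet K S ∧ d = setDensity K S}

namespace LatAux

variable {n : ℕ}

/-- The inner-product dual basis. -/
def dB (B : Module.Basis (Fin n) ℝ (Euc n)) : Module.Basis (Fin n) ℝ (Euc n) :=
  B.dualBasis.map ((LinearMap.toContinuousLinearMap).trans
    (InnerProductSpace.toDual ℝ (Euc n)).symm.toLinearEquiv)

lemma inner_dB (B : Module.Basis (Fin n) ℝ (Euc n)) (j : Fin n) (y : Euc n) :
    ⟪dB B j, y⟫ = B.repr y j := by
  rw [dB, Module.Basis.map_apply, LinearEquiv.trans_apply]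
  rw [LinearIsometryEquiv.coe_toLinearEquiv, InnerProductSpace.toDual_symm_apply]
  rw [LinearMap.coe_toContinuousLinearMap']
  exact B.dualBasis_apply j y

lemma inner_B_dB (B : Module.Basis (Fin n) ℝ (Euc n)) (j k : Fin n) :
    ⟪B j, dB B k⟫ = if j = k then 1 else 0 := by
  rw [real_inner_comm, inner_dB, Module.Basis.repr_self, Finsupp.single_apply]

lemma repr_dB (B : Module.Basis (Fin n) ℝ (Euc n)) (y : Euc n) (j : Fin n) :
    (dB B).repr y j = ⟪B j, y⟫ := by
  conv_rhs => rw [← Module.Basis.sum_repr (dB B) y]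
  rw [inner_sum]
  simp only [real_inner_smul_right, inner_B_dB, mul_ite, mul_one, mul_zero]
  rw [Finset.sum_ite_eq]
  simp

lemma dB_dB (B : Module.Basis (Fin n) ℝ (Euc n)) : ⇑(dB (dB B)) = ⇑B := by
  funext j
  apply ext_inner_right ℝ
  intro y
  rw [inner_dB, repr_dB]

end LatAux

namespace LatAux

variable {n : ℕ}

/-- Real vector with rational coordinates in the basis `B`. -/
def Phi (B : Module.Basis (Fin n) ℝ (Euc n)) (c : Fin n → ℚ) : Euc n :=
  ∑ k, (c k : ℝ) • B k

lemma Phi_eq (B : Module.Basis (Fin n) ℝ (Euc n)) (c : Fin n → ℚ) :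
    Phi B c = B.equivFun.symm (fun k => (c k : ℝ)) := by
  rw [Module.Basis.equivFun_symm_apply]; rfl

lemma repr_Phi (B : Module.Basis (Fin n) ℝ (Euc n)) (c : Fin n → ℚ) (j : Fin n) :
    B.repr (Phi B c) j = (c j : ℝ) := by
  rw [Phi_eq, ← Module.Basis.equivFun_apply, LinearEquiv.apply_symm_apply]

lemma Phi_add (B : Module.Basis (Fin n) ℝ (Euc n)) (c d : Fin n → ℚ) :
    Phi B (c + d) = Phi B c + Phi B d := by
  simp [Phi, add_smul, Finset.sum_add_distrib]

lemma Phi_zero (B : Module.Basis (Fin n) ℝ (Euc n)) : Phi B 0 = 0 := by simp [Phi]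

lemma Phi_smul (B : Module.Basis (Fin n) ℝ (Euc n)) (q : ℚ) (c : Fin n → ℚ) :
    Phi B (q • c) = (q : ℝ) • Phi B c := by
  simp [Phi, Finset.smul_sum, smul_smul, Rat.smul_def]

lemma repr_int (B : Module.Basis (Fin n) ℝ (Euc n)) (z : Fin n → ℤ) (j : Fin n) :
    B.repr (∑ k, (z k : ℝ) • B k) j = (z j : ℝ) := by
  have : (∑ k, (z k : ℝ) • B k) = Phi B (fun k => (z k : ℚ)) := by
    simp [Phi]
  rw [this, repr_Phi]; simp

lemma inner_int_dB (B : Module.Basis (Fin n) ℝ (Euc n)) (z : Fin n → ℤ) (j : Fin n) :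
    ⟪∑ k, (z k : ℝ) • B k, dB B j⟫ = (z j : ℝ) := by
  rw [real_inner_comm, inner_dB, repr_int]

lemma dual_intSpan (B : Module.Basis (Fin n) ℝ (Euc n)) :
    dualLattice (intSpan ⇑B) = intSpan ⇑(dB B) := by
  ext y
  constructor
  · intro hy
    have hBk : ∀ k, B k ∈ intSpan ⇑B := by
      intro k
      refine ⟨Pi.single k 1, ?_⟩
      simp [Pi.single_apply, ite_smul]
    choose m hm using fun k => hy (B k) (hBk k)
    refine ⟨m, ?_⟩
    conv_lhs => rw [← Module.Basis.sum_repr (dB B) y]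
    congr 1
    funext k
    rw [repr_dB, hm k]
  · rintro ⟨z, rfl⟩ x ⟨w, rfl⟩
    refine ⟨∑ j, w j * z j, ?_⟩
    rw [inner_sum]
    push_cast
    congr 1
    funext j
    rw [real_inner_smul_right, inner_int_dB]; ring

lemma rat_clear (q : ℚ) (N : ℕ) (h : q.den ∣ N) : ∃ z : ℤ, ((N : ℚ)) * q = (z : ℚ) := by
  obtain ⟨c, hc⟩ := h
  refine ⟨q.num * c, ?_⟩
  subst hc
  push_cast
  rw [mul_comm (q.den : ℚ) (c : ℚ), mul_assoc, Rat.den_mul_eq_num]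
  ring

end LatAux

namespace LatAux

variable {n : ℕ}

lemma mem_orthogonal_span {s : Set (Euc n)} {y : Euc n}
    (h : ∀ x ∈ s, ⟪x, y⟫ = 0) : y ∈ (Submodule.span ℝ s)ᗮ := by
  rw [Submodule.mem_orthogonal]
  intro u hu
  induction hu using Submodule.span_induction with
  | mem x hx => exact h x hx
  | zero => simp
  | add x x' hx hx' ihx ihx' => rw [inner_add_left, ihx, ihx', add_zero]
  | smul a x hx ih => rw [real_inner_smul_left, ih, mul_zero]

lemma inner_sum_sum (B : Module.Basis (Fin n) ℝ (Euc n)) (a bb : Fin n → ℝ) :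
    ⟪∑ k, a k • B k, ∑ l, bb l • dB B l⟫ = ∑ k, a k * bb k := by
  rw [sum_inner]
  refine Finset.sum_congr rfl fun k _ => ?_
  rw [real_inner_smul_left, inner_sum]
  simp only [real_inner_smul_right, inner_B_dB, mul_ite, mul_one, mul_zero]
  rw [Finset.sum_ite_eq]
  simp [mul_comm]

set_option maxHeartbeats 1600000 in
lemma main (B : Module.Basis (Fin n) ℝ (Euc n)) (L : Submodule ℝ (Euc n))
    (hspan : Submodule.span ℝ (intSpan ⇑B ∩ L) = L) :
    Submodule.span ℝ (intSpan ⇑(dB B) ∩ Lᗮ) = Lᗮ := by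
  classical
  -- the ℚ-submodule of rational coordinate vectors of elements of L
  let J : Submodule ℚ (Fin n → ℚ) :=
    { carrier := {c | Phi B c ∈ L}
      add_mem' := fun ha hb => by
        simp only [Set.mem_setOf_eq, Phi_add] at *
        exact L.add_mem ha hb
      zero_mem' := by simp only [Set.mem_setOf_eq, Phi_zero]; exact L.zero_mem
      smul_mem' := fun q c hc => by
        simp only [Set.mem_setOf_eq, Phi_smul] at *
        exact L.smul_mem _ hc }
  have hJmem : ∀ c : Fin n → ℚ, c ∈ J ↔ Phi B c ∈ L := fun c => Iff.rfl
  obtain ⟨t₀, ht₀J, ht₀span, ht₀li⟩ := exists_linearIndependent ℚ (J : Set (Fin n → ℚ))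
  replace ht₀li : LinearIndepOn ℚ id t₀ := ht₀li
  have ht₀t : t₀ ⊆ ht₀li.extend (Set.subset_univ t₀) := ht₀li.subset_extend _
  set t : Set (Fin n → ℚ) := ht₀li.extend (Set.subset_univ t₀) with ht_def
  have htli : LinearIndependent ℚ ((↑) : t → (Fin n → ℚ)) := (ht₀li.linearIndepOn_extend _).linearIndependent
  have htspan : Submodule.span ℚ t = ⊤ := by
    rw [ht₀li.span_extend_eq_span, Submodule.span_univ]
  haveI : Fintype t := (htli.setFinite).fintype
  have hcard : Fintype.card t = n := by
    have := Module.finrank_eq_card_basis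
      (Module.Basis.mk htli (by rw [Subtype.range_coe]; exact htspan.ge))
    rw [Module.finrank_pi, Fintype.card_fin] at this
    exact this.symm
  let e : Fin n ≃ t := (Fintype.equivFinOfCardEq hcard).symm
  let r : Fin n → (Fin n → ℚ) := fun j => (e j : Fin n → ℚ)
  have hr_li : LinearIndependent ℚ r := htli.comp e e.injective
  -- matrices
  let Q₀ : Matrix (Fin n) (Fin n) ℚ := Matrix.of r
  have hQ₀ : IsUnit Q₀ := Matrix.linearIndependent_rows_iff_isUnit.mp hr_li
  have hdet₀ : Q₀.det ≠ 0 := ((Matrix.isUnit_iff_isUnit_det Q₀).mp hQ₀).ne_zero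
  let Q : Matrix (Fin n) (Fin n) ℝ := Q₀.map ((↑) : ℚ → ℝ)
  have hQ : IsUnit Q := by
    rw [Matrix.isUnit_iff_isUnit_det, isUnit_iff_ne_zero]
    have : Q.det = ((Q₀.det : ℚ) : ℝ) := ((Rat.castHom ℝ).map_det Q₀).symm
    rw [this]
    exact_mod_cast hdet₀
  -- the rational real basis
  let v : Fin n → Euc n := fun j => Phi B (r j)
  have hv_li : LinearIndependent ℝ v := by
    have hQrows : LinearIndependent ℝ (fun i => Q i) :=
      Matrix.linearIndependent_rows_iff_isUnit.mpr hQ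
    have h2 := hQrows.map' B.equivFun.symm.toLinearMap B.equivFun.symm.ker
    have heq : v = ⇑B.equivFun.symm ∘ (fun i => Q i) := by
      funext j
      show Phi B (r j) = B.equivFun.symm (Q j)
      rw [Phi_eq]
      rfl
    rw [heq]; exact h2
  -- index set of basis vectors lying in L
  let T₀ : Finset (Fin n) := Finset.univ.filter (fun j => r j ∈ J)
  have hvT₀L : ∀ j ∈ T₀, v j ∈ L := by
    intro j hj
    have : r j ∈ J := (Finset.mem_filter.mp hj).2
    exact (hJmem (r j)).mp this
  have key : ∀ c : Fin n → ℚ, c ∈ Submodule.span ℚ t₀ →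
      Phi B c ∈ Submodule.span ℝ (v '' ↑T₀) := by
    intro c hc
    induction hc using Submodule.span_induction with
    | mem c' hc' =>
      have hc'J : c' ∈ J := ht₀J hc'
      have hc't : c' ∈ t := ht₀t hc'
      have : v (e.symm ⟨c', hc't⟩) = Phi B c' := by
        simp only [v, r]
        rw [Equiv.apply_symm_apply]
      rw [← this]
      apply Submodule.subset_span
      refine ⟨e.symm ⟨c', hc't⟩, ?_, rfl⟩
      simp only [T₀, Finset.coe_filter, Set.mem_setOf_eq, Finset.mem_univ, true_and]
      show r (e.symm ⟨c', hc't⟩) ∈ J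
      simp only [r]
      rw [Equiv.apply_symm_apply]
      exact hc'J
    | zero => rw [Phi_zero]; exact Submodule.zero_mem _
    | add c₁ c₂ h₁ h₂ ih₁ ih₂ => rw [Phi_add]; exact Submodule.add_mem _ ih₁ ih₂
    | smul q c₁ h₁ ih => rw [Phi_smul]; exact Submodule.smul_mem _ _ ih
  have hLle : L ≤ Submodule.span ℝ (v '' ↑T₀) := by
    rw [← hspan, Submodule.span_le]
    rintro x ⟨⟨z, rfl⟩, hxL⟩
    have hΦ : Phi B (fun k => (z k : ℚ)) = ∑ k, (z k : ℝ) • B k := by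
      simp [Phi]
    have hcJ : (fun k => (z k : ℚ)) ∈ J := by rw [hJmem, hΦ]; exact hxL
    have hc : (fun k => (z k : ℚ)) ∈ Submodule.span ℚ t₀ := by
      rw [ht₀span, Submodule.span_eq]; exact hcJ
    rw [← hΦ]
    exact key _ hc
  have hT₀L : Submodule.span ℝ (v '' ↑T₀) ≤ L := by
    rw [Submodule.span_le]
    rintro x ⟨j, hj, rfl⟩
    exact hvT₀L j hj
  have hLeq : L = Submodule.span ℝ (v '' ↑T₀) := le_antisymm hLle hT₀L
  -- cardinality of T₀
  have hT₀li : LinearIndependent ℝ (fun j : ↥(↑T₀ : Set (Fin n)) => v ↑j) :=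
    hv_li.comp _ Subtype.val_injective
  have hT₀card : T₀.card = Module.finrank ℝ L := by
    rw [hLeq, Set.image_eq_range, finrank_span_eq_card hT₀li]
    simp
  -- inverse matrix and denominators
  obtain ⟨R, hQR⟩ : ∃ R : Matrix (Fin n) (Fin n) ℚ, Q₀ * R = 1 :=
    ⟨Q₀⁻¹, Matrix.mul_nonsing_inv Q₀ ((Matrix.isUnit_iff_isUnit_det Q₀).mp hQ₀)⟩
  obtain ⟨N, hNpos, hNden⟩ : ∃ N : ℕ, 0 < N ∧ ∀ k j : Fin n, (R k j).den ∣ N :=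
    ⟨∏ p : Fin n × Fin n, (R p.1 p.2).den,
      Finset.prod_pos fun p _ => (R p.1 p.2).den_pos,
      fun k j => Finset.dvd_prod_of_mem (fun p => (R p.1 p.2).den) (Finset.mem_univ (k, j))⟩
  have hN0 : (N : ℝ) ≠ 0 := by exact_mod_cast hNpos.ne'
  have hint : ∀ k j : Fin n, ∃ z : ℤ, ((N : ℚ)) * R k j = (z : ℚ) :=
    fun k j => rat_clear _ _ (hNden k j)
  choose Z hZ using hint
  have hZR : ∀ k j : Fin n, ((Z k j : ℝ)) = (N : ℝ) * ((R k j : ℚ) : ℝ) := by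
    intro k j
    have := hZ k j
    exact_mod_cast this.symm
  -- the dual vectors
  let w : Fin n → Euc n := fun j => ∑ k, ((Z k j : ℤ) : ℝ) • dB B k
  have hw_mem : ∀ j, w j ∈ intSpan ⇑(dB B) := fun j => ⟨fun k => Z k j, rfl⟩
  have hvw : ∀ m j : Fin n, ⟪v m, w j⟫ = if m = j then (N : ℝ) else 0 := by
    intro m j
    have hv_eq : v m = ∑ k, ((r m k : ℚ) : ℝ) • B k := rfl
    rw [hv_eq, inner_sum_sum]
    have : ∀ k, ((r m k : ℚ) : ℝ) * ((Z k j : ℤ) : ℝ)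
        = (N : ℝ) * (((Q₀ m k : ℚ) : ℝ) * ((R k j : ℚ) : ℝ)) := by
      intro k
      rw [hZR]
      have hqr : (Q₀ m k : ℚ) = r m k := rfl
      rw [hqr]
      ring
    rw [Finset.sum_congr rfl (fun k _ => this k), ← Finset.mul_sum]
    have hsum : ∑ k, ((Q₀ m k : ℚ) : ℝ) * ((R k j : ℚ) : ℝ) = (((Q₀ * R) m j : ℚ) : ℝ) := by
      rw [Matrix.mul_apply]
      push_cast
      rfl
    rw [hsum, hQR, Matrix.one_apply]
    by_cases h : m = j <;> simp [h]
  -- w j is orthogonal to L for j outside T₀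
  have hw_perp : ∀ j ∈ T₀ᶜ, w j ∈ Lᗮ := by
    intro j hj
    have hjT₀ : j ∉ T₀ := Finset.mem_compl.mp hj
    rw [hLeq]
    apply mem_orthogonal_span
    rintro x ⟨m, hm, rfl⟩
    rw [hvw]
    have : m ≠ j := fun h => hjT₀ (h ▸ hm)
    simp [this]
  -- linear independence of the w family over T₀ᶜ
  have hW_li : LinearIndependent ℝ (fun j : ↥(T₀ᶜ) => w ↑j) := by
    rw [Fintype.linearIndependent_iff]
    intro c hc
    intro m
    have h1 : ⟪v ↑m, ∑ j : ↥(T₀ᶜ), c j • w ↑j⟫ = 0 := by rw [hc, inner_zero_right]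
    rw [inner_sum] at h1
    have h2 : ∀ j : ↥(T₀ᶜ), ⟪v ↑m, c j • w ↑j⟫ = if m = j then c j * (N : ℝ) else 0 := by
      intro j
      rw [real_inner_smul_right, hvw]
      by_cases h : m = j
      · subst h; simp
      · have : (↑m : Fin n) ≠ ↑j := fun hh => h (Subtype.ext hh)
        simp [h, this]
    rw [Finset.sum_congr rfl (fun j _ => h2 j), Finset.sum_ite_eq] at h1
    simp only [Finset.mem_univ, if_true] at h1
    exact (mul_eq_zero.mp h1).resolve_right hN0
  -- dimension bookkeeping
  have hEn : Module.finrank ℝ (Euc n) = n := finrank_euclideanSpace_fin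
  have hsum := Submodule.finrank_add_finrank_orthogonal L
  rw [hEn] at hsum
  have hWcard : Module.finrank ℝ (Submodule.span ℝ (Set.range (fun j : ↥(T₀ᶜ) => w ↑j)))
      = n - Module.finrank ℝ L := by
    rw [finrank_span_eq_card hW_li, Fintype.card_coe, Finset.card_compl, Fintype.card_fin,
      hT₀card]
  have hA_le : Submodule.span ℝ (Set.range (fun j : ↥(T₀ᶜ) => w ↑j))
      ≤ Submodule.span ℝ (intSpan ⇑(dB B) ∩ Lᗮ) := by
    apply Submodule.span_mono
    rintro x ⟨j, rfl⟩
    exact ⟨hw_mem _, hw_perp _ j.2⟩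
  have hB_le : Submodule.span ℝ (intSpan ⇑(dB B) ∩ Lᗮ) ≤ Lᗮ := by
    rw [Submodule.span_le]
    exact Set.inter_subset_right
  have hA_eq : Submodule.span ℝ (Set.range (fun j : ↥(T₀ᶜ) => w ↑j)) = Lᗮ := by
    apply Submodule.eq_of_le_of_finrank_le (hA_le.trans hB_le)
    rw [hWcard]
    omega
  exact le_antisymm hB_le (hA_eq ▸ hA_le)

end LatAux

/-- `L` is an `i`-dimensional lattice plane of `Λ` iff `L^⊥` is an
`(n-i)`-dimensional lattice plane of the dual lattice `Λ*`. -/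

theorem stmt1 {n i : ℕ} (hi : i ≤ n) (Λ : Set (Euc n)) (hΛ : IsLattice Λ)
    (L : Submodule ℝ (Euc n)) :
    IsLatticePlane Λ i L ↔ IsLatticePlane (dualLattice Λ) (n - i) Lᗮ := by
  obtain ⟨b, rfl⟩ := hΛ
  have hEn : Module.finrank ℝ (Euc n) = n := finrank_euclideanSpace_fin
  have hsum := Submodule.finrank_add_finrank_orthogonal (K := L)
  rw [hEn] at hsum
  constructor
  · rintro ⟨hdim, hspan⟩
    refine ⟨by omega, ?_⟩
    rw [LatAux.dual_intSpan b]
    exact LatAux.main b L hspan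
  · rintro ⟨hdim, hspan⟩
    rw [LatAux.dual_intSpan b] at hspan
    have h2 := LatAux.main (LatAux.dB b) Lᗮ hspan
    rw [LatAux.dB_dB b, Submodule.orthogonal_orthogonal L] at h2
    exact ⟨by omega, h2⟩

end
end

section
/- The function f(m) = Γ(m/2+1)^{1/m}/√m is monotonically decreasing in m (for real m ≥ 1), and consequently for integers 1 ≤ i ≤ n, the ratio κ_n^{1/n}/κ_i^{1/i} = Γ(n/2+1)^{1/n}/Γ(i/2+1)^{1/i} ≥ √(i/n), where κ_d = π^{d/2}/Γ(d/2+1) is the volume of the d-dimensional unit ball. -/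
open scoped RealInnerProductSpace Pointwise
open MeasureTheory Filter

noncomputable section

private lemma perterm {a x : ℝ} (ha : 1 ≤ a) (hx : 0 < x) :
    a * Real.log (1 + x / a) ≤ a * Real.log (1 + x / (a + 1)) + x / (x + a + 1) := by
  have ha0 : 0 < a := lt_of_lt_of_le one_pos ha
  have hu : 0 < 1 + x / a := by positivity
  have hv : 0 < 1 + x / (a + 1) := by positivity
  have key : Real.log (1 + x / a) - Real.log (1 + x / (a + 1)) ≤ x / (a * (x + a + 1)) := by
    have h1 : Real.log ((1 + x / a) / (1 + x / (a + 1))) ≤ (1 + x / a) / (1 + x / (a + 1)) - 1 :=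
      Real.log_le_sub_one_of_pos (by positivity)
    have h2 : (1 + x / a) / (1 + x / (a + 1)) - 1 = x / (a * (x + a + 1)) := by
      field_simp
      ring
    rw [Real.log_div (ne_of_gt hu) (ne_of_gt hv)] at h1
    linarith
  have h3 := mul_le_mul_of_nonneg_left key ha0.le
  have h4 : a * (x / (a * (x + a + 1))) = x / (x + a + 1) := by
    field_simp
  rw [mul_sub, h4] at h3
  linarith

private lemma sum_bound' (n : ℕ) {x : ℝ} (hx : 0 < x) :
    ∑ k ∈ Finset.range n, (Real.log (1 + x / ((k : ℝ) + 1)) - x / (x + ((k : ℝ) + 1)))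
      ≤ (n : ℝ) * Real.log (1 + x / n) := by
  induction n with
  | zero => simp
  | succ n ih =>
    rw [Finset.sum_range_succ]
    have step : (n : ℝ) * Real.log (1 + x / n)
        ≤ (n : ℝ) * Real.log (1 + x / ((n : ℝ) + 1)) + x / (x + ((n : ℝ) + 1)) := by
      rcases Nat.eq_zero_or_pos n with h | h
      · subst h
        simp
        positivity
      · have h1 : (1 : ℝ) ≤ (n : ℝ) := by exact_mod_cast h
        have := perterm h1 hx
        convert this using 3 <;> ring
    push_cast
    have : ((n : ℝ) + 1) * Real.log (1 + x / ((n : ℝ) + 1))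
        = (n : ℝ) * Real.log (1 + x / ((n : ℝ) + 1)) + Real.log (1 + x / ((n : ℝ) + 1)) := by
      ring
    rw [this]
    linarith

private lemma sum_bound (n : ℕ) {x : ℝ} (hx : 0 < x) :
    ∑ k ∈ Finset.range n, (Real.log (1 + x / ((k : ℝ) + 1)) - x / (x + ((k : ℝ) + 1))) ≤ x := by
  refine le_trans (sum_bound' n hx) ?_
  rcases Nat.eq_zero_or_pos n with h | h
  · subst h; simp [hx.le]
  · have hn : (0 : ℝ) < n := by exact_mod_cast h
    have h1 : Real.log (1 + x / n) ≤ x / n := by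
      have := Real.log_le_sub_one_of_pos (show (0:ℝ) < 1 + x / n by positivity)
      linarith
    have := mul_le_mul_of_nonneg_left h1 hn.le
    rw [mul_div_cancel₀ x (ne_of_gt hn)] at this
    linarith

private def Bfun (n : ℕ) (x : ℝ) : ℝ :=
  Real.log n + (Real.log (Nat.factorial n) - ∑ k ∈ Finset.range n, Real.log (x + ((k : ℝ) + 1))) * x⁻¹
    - Real.log x

private lemma Bfun_hasDeriv (n : ℕ) {x : ℝ} (hx : 0 < x) :
    HasDerivAt (Bfun n)
      ((-(∑ k ∈ Finset.range n, (x + ((k : ℝ) + 1))⁻¹)) * x⁻¹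
        + (Real.log (Nat.factorial n) - ∑ k ∈ Finset.range n, Real.log (x + ((k : ℝ) + 1))) * (-(x ^ 2)⁻¹)
        - x⁻¹) x := by
  have hS : HasDerivAt (fun y : ℝ => ∑ k ∈ Finset.range n, Real.log (y + ((k : ℝ) + 1)))
      (∑ k ∈ Finset.range n, (x + ((k : ℝ) + 1))⁻¹) x := by
    apply HasDerivAt.fun_sum
    intro k _
    have h1 : HasDerivAt (fun y : ℝ => y + ((k : ℝ) + 1)) 1 x := (hasDerivAt_id x).add_const _
    simpa using h1.log (by positivity)
  have h2 : HasDerivAt (fun y : ℝ => y⁻¹) (-(x ^ 2)⁻¹) x := hasDerivAt_inv (ne_of_gt hx)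
  have hmul := ((hS.const_sub (Real.log (Nat.factorial n))).mul h2)
  have hlog := Real.hasDerivAt_log (ne_of_gt hx)
  exact ((hmul.const_add (Real.log n)).sub hlog)

private lemma Bfun_deriv_nonpos (n : ℕ) {x : ℝ} (hx : 0 < x) : deriv (Bfun n) x ≤ 0 := by
  rw [(Bfun_hasDeriv n hx).deriv]
  set S := ∑ k ∈ Finset.range n, Real.log (x + ((k : ℝ) + 1)) with hSdef
  set T := ∑ k ∈ Finset.range n, (x + ((k : ℝ) + 1))⁻¹ with hTdef
  set c := Real.log ((Nat.factorial n : ℕ)) with hcdef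
  have hc : c = ∑ k ∈ Finset.range n, Real.log ((k : ℝ) + 1) := by
    rw [hcdef, ← Finset.prod_range_add_one_eq_factorial]
    push_cast
    rw [Real.log_prod]
    intro k _
    positivity
  have key : S - c - x * T ≤ x := by
    have hsum := sum_bound n hx
    have e1 : S - c - x * T
        = ∑ k ∈ Finset.range n,
            (Real.log (1 + x / ((k : ℝ) + 1)) - x / (x + ((k : ℝ) + 1))) := by
      rw [hc, hSdef, hTdef, Finset.mul_sum, ← Finset.sum_sub_distrib, ← Finset.sum_sub_distrib]
      apply Finset.sum_congr rfl
      intro k _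
      have hk : (0 : ℝ) < (k : ℝ) + 1 := by positivity
      have hxk : (0 : ℝ) < x + ((k : ℝ) + 1) := by positivity
      have : (1 : ℝ) + x / ((k : ℝ) + 1) = (x + ((k : ℝ) + 1)) / ((k : ℝ) + 1) := by
        field_simp
        ring
      rw [this, Real.log_div (ne_of_gt hxk) (ne_of_gt hk), ← div_eq_mul_inv]
    rw [e1]
    exact hsum
  have hx2 : (0 : ℝ) < x ^ 2 := by positivity
  have heq : -T * x⁻¹ + (c - S) * (-(x ^ 2)⁻¹) - x⁻¹
      = (S - c - x * T) * (x ^ 2)⁻¹ - x * (x ^ 2)⁻¹ := by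
    field_simp
    ring
  rw [heq]
  have h1 := mul_le_mul_of_nonneg_right key (inv_pos.mpr hx2).le
  linarith

private lemma Bfun_anti (n : ℕ) : AntitoneOn (Bfun n) (Set.Ioi 0) := by
  apply antitoneOn_of_deriv_nonpos (convex_Ioi 0)
  · intro x hx
    exact ((Bfun_hasDeriv n hx).continuousAt).continuousWithinAt
  · rw [interior_Ioi]
    intro x hx
    exact ((Bfun_hasDeriv n hx).differentiableAt).differentiableWithinAt
  · rw [interior_Ioi]
    intro x hx
    exact Bfun_deriv_nonpos n hx

private lemma Bfun_tendsto {x : ℝ} (hx : 0 < x) :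
    Tendsto (fun n => Bfun n x) atTop
      (nhds (Real.log (Real.Gamma (x + 1)) / x - Real.log x)) := by
  have hG : 0 < Real.Gamma x := Real.Gamma_pos_of_pos hx
  have h1 := Real.GammaSeq_tendsto_Gamma x
  have h2 : Tendsto (fun n => Real.log (Real.GammaSeq x n)) atTop (nhds (Real.log (Real.Gamma x))) :=
    ((Real.continuousAt_log (ne_of_gt hG)).tendsto).comp h1
  have h3 : Tendsto (fun n => Real.log (Real.GammaSeq x n) / x + Real.log x / x - Real.log x)
      atTop (nhds (Real.log (Real.Gamma x) / x + Real.log x / x - Real.log x)) :=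
    ((h2.div_const x).add_const _).sub_const _
  have hval : Real.log (Real.Gamma x) / x + Real.log x / x - Real.log x
      = Real.log (Real.Gamma (x + 1)) / x - Real.log x := by
    rw [Real.Gamma_add_one (ne_of_gt hx), Real.log_mul (ne_of_gt hx) (ne_of_gt hG)]
    ring
  rw [← hval]
  apply h3.congr'
  filter_upwards [eventually_ge_atTop 1] with n hn
  -- show log (GammaSeq x n)/x + log x/x - log x = Bfun n x
  have hn0 : (0 : ℝ) < n := by exact_mod_cast hn
  have hprod : (0 : ℝ) < ∏ j ∈ Finset.range (n + 1), (x + (j : ℝ)) := by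
    apply Finset.prod_pos
    intro j _
    positivity
  have hfact : (0 : ℝ) < (Nat.factorial n : ℝ) := by exact_mod_cast Nat.factorial_pos n
  have hrpow : (0 : ℝ) < (n : ℝ) ^ x := Real.rpow_pos_of_pos hn0 x
  have hlogG : Real.log (Real.GammaSeq x n)
      = x * Real.log n + Real.log (Nat.factorial n)
        - (Real.log x + ∑ k ∈ Finset.range n, Real.log (x + ((k : ℝ) + 1))) := by
    rw [Real.GammaSeq, Real.log_div (by positivity) (ne_of_gt hprod),
      Real.log_mul (ne_of_gt hrpow) (ne_of_gt hfact), Real.log_rpow hn0,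
      Real.log_prod (fun j _ => by positivity)]
    congr 1
    rw [Finset.sum_range_succ']
    push_cast
    rw [add_comm]
    simp
  rw [hlogG, Bfun]
  field_simp
  ring

private lemma phi_anti {x y : ℝ} (hx : 0 < x) (hxy : x ≤ y) :
    Real.log (Real.Gamma (y + 1)) / y - Real.log y
      ≤ Real.log (Real.Gamma (x + 1)) / x - Real.log x := by
  have hy : 0 < y := lt_of_lt_of_le hx hxy
  exact le_of_tendsto_of_tendsto' (Bfun_tendsto hy) (Bfun_tendsto hx)
    (fun n => Bfun_anti n (Set.mem_Ioi.mpr hx) (Set.mem_Ioi.mpr hy) hxy)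

private lemma main1 {x y : ℝ} (hx : 1 ≤ x) (hxy : x ≤ y) :
    Real.Gamma (y / 2 + 1) ^ ((1 : ℝ) / y) / Real.sqrt y
      ≤ Real.Gamma (x / 2 + 1) ^ ((1 : ℝ) / x) / Real.sqrt x := by
  have hx0 : 0 < x := lt_of_lt_of_le one_pos hx
  have hy0 : 0 < y := lt_of_lt_of_le hx0 hxy
  have hGx : 0 < Real.Gamma (x / 2 + 1) := Real.Gamma_pos_of_pos (by linarith)
  have hGy : 0 < Real.Gamma (y / 2 + 1) := Real.Gamma_pos_of_pos (by linarith)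
  have hsx : 0 < Real.sqrt x := Real.sqrt_pos.mpr hx0
  have hsy : 0 < Real.sqrt y := Real.sqrt_pos.mpr hy0
  have hL : 0 < Real.Gamma (y / 2 + 1) ^ ((1 : ℝ) / y) / Real.sqrt y :=
    div_pos (Real.rpow_pos_of_pos hGy _) hsy
  have hR : 0 < Real.Gamma (x / 2 + 1) ^ ((1 : ℝ) / x) / Real.sqrt x :=
    div_pos (Real.rpow_pos_of_pos hGx _) hsx
  rw [← Real.log_le_log_iff hL hR,
    Real.log_div (ne_of_gt (Real.rpow_pos_of_pos hGy _)) (ne_of_gt hsy),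
    Real.log_div (ne_of_gt (Real.rpow_pos_of_pos hGx _)) (ne_of_gt hsx),
    Real.log_rpow hGy, Real.log_rpow hGx, Real.log_sqrt hy0.le, Real.log_sqrt hx0.le]
  have hphi := phi_anti (x := x / 2) (y := y / 2) (by linarith) (by linarith)
  have ex : Real.log (x / 2) = Real.log x - Real.log 2 :=
    Real.log_div (ne_of_gt hx0) two_ne_zero
  have ey : Real.log (y / 2) = Real.log y - Real.log 2 :=
    Real.log_div (ne_of_gt hy0) two_ne_zero
  have e3 : Real.log (Real.Gamma (y / 2 + 1)) / (y / 2)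
      = 2 * (Real.log (Real.Gamma (y / 2 + 1)) / y) := by
    field_simp
  have e4 : Real.log (Real.Gamma (x / 2 + 1)) / (x / 2)
      = 2 * (Real.log (Real.Gamma (x / 2 + 1)) / x) := by
    field_simp
  rw [ex, ey, e3, e4] at hphi
  have g1 : (1 : ℝ) / y * Real.log (Real.Gamma (y / 2 + 1))
      = Real.log (Real.Gamma (y / 2 + 1)) / y := by ring
  have g2 : (1 : ℝ) / x * Real.log (Real.Gamma (x / 2 + 1))
      = Real.log (Real.Gamma (x / 2 + 1)) / x := by ring
  rw [g1, g2]
  linarith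

private lemma kappa_rpow {d : ℕ} (hd : 1 ≤ d) :
    kappa d ^ ((1 : ℝ) / d)
      = Real.pi ^ ((1 : ℝ) / 2) / Real.Gamma ((d : ℝ) / 2 + 1) ^ ((1 : ℝ) / d) := by
  have hd0 : (0 : ℝ) < d := by exact_mod_cast hd
  have hG : 0 < Real.Gamma ((d : ℝ) / 2 + 1) := Real.Gamma_pos_of_pos (by positivity)
  rw [kappa, Real.div_rpow (Real.rpow_nonneg Real.pi_nonneg _) hG.le,
    ← Real.rpow_mul Real.pi_nonneg]
  congr 2
  field_simp

private lemma main2 (i n : ℕ) (hi : 1 ≤ i) (hin : i ≤ n) :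
    Real.sqrt ((i : ℝ) / n) ≤ kappa n ^ ((1 : ℝ) / n) / kappa i ^ ((1 : ℝ) / i) ∧
      kappa n ^ ((1 : ℝ) / n) / kappa i ^ ((1 : ℝ) / i) =
        Real.Gamma ((i : ℝ) / 2 + 1) ^ ((1 : ℝ) / i) /
          Real.Gamma ((n : ℝ) / 2 + 1) ^ ((1 : ℝ) / n) := by
  have hn : 1 ≤ n := le_trans hi hin
  have hi0 : (0 : ℝ) < i := by exact_mod_cast hi
  have hn0 : (0 : ℝ) < n := by exact_mod_cast lt_of_lt_of_le Nat.one_pos hn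
  have hGi : 0 < Real.Gamma ((i : ℝ) / 2 + 1) := Real.Gamma_pos_of_pos (by positivity)
  have hGn : 0 < Real.Gamma ((n : ℝ) / 2 + 1) := Real.Gamma_pos_of_pos (by positivity)
  have hA : 0 < Real.Gamma ((n : ℝ) / 2 + 1) ^ ((1 : ℝ) / n) := Real.rpow_pos_of_pos hGn _
  have hB : 0 < Real.Gamma ((i : ℝ) / 2 + 1) ^ ((1 : ℝ) / i) := Real.rpow_pos_of_pos hGi _
  have hpi : Real.pi ^ ((1 : ℝ) / 2) ≠ 0 := ne_of_gt (Real.rpow_pos_of_pos Real.pi_pos _)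
  have heq : kappa n ^ ((1 : ℝ) / n) / kappa i ^ ((1 : ℝ) / i) =
      Real.Gamma ((i : ℝ) / 2 + 1) ^ ((1 : ℝ) / i) /
        Real.Gamma ((n : ℝ) / 2 + 1) ^ ((1 : ℝ) / n) := by
    rw [kappa_rpow hn, kappa_rpow hi, div_div_div_comm, div_self hpi, one_div_div]
  refine ⟨?_, heq⟩
  rw [heq]
  have hsi : 0 < Real.sqrt (i : ℝ) := Real.sqrt_pos.mpr hi0
  have hsn : 0 < Real.sqrt (n : ℝ) := Real.sqrt_pos.mpr hn0
  have hmain := main1 (x := (i : ℝ)) (y := (n : ℝ)) (by exact_mod_cast hi) (by exact_mod_cast hin)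
  rw [Real.sqrt_div (Nat.cast_nonneg i) (n : ℝ)]
  rw [div_le_div_iff₀ hsn hA]
  have h2 := (div_le_div_iff₀ hsn hsi).mp hmain
  nlinarith [h2, hsi, hsn, hA, hB]

/-- `Γ(m/2+1)^{1/m}/√m` is decreasing for `m ≥ 1`, and consequently
`κ_n^{1/n}/κ_i^{1/i} = Γ(i/2+1)^{1/i}/Γ(n/2+1)^{1/n} ≥ √(i/n)` for `1 ≤ i ≤ n`. -/
theorem stmt10 :
    (∀ x y : ℝ, 1 ≤ x → x ≤ y →
      Real.Gamma (y / 2 + 1) ^ ((1 : ℝ) / y) / Real.sqrt y ≤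
        Real.Gamma (x / 2 + 1) ^ ((1 : ℝ) / x) / Real.sqrt x) ∧
    (∀ i n : ℕ, 1 ≤ i → i ≤ n →
      Real.sqrt ((i : ℝ) / n) ≤ kappa n ^ ((1 : ℝ) / n) / kappa i ^ ((1 : ℝ) / i) ∧
      kappa n ^ ((1 : ℝ) / n) / kappa i ^ ((1 : ℝ) / i) =
        Real.Gamma ((i : ℝ) / 2 + 1) ^ ((1 : ℝ) / i) / Real.Gamma ((n : ℝ) / 2 + 1) ^ ((1 : ℝ) / n)) :=
  ⟨fun _ _ hx hxy => main1 hx hxy, fun i n hi hin => main2 i n hi hin⟩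

end
end
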